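/- For two particles (N = 2) on ℤ, the Bethe function Ψ(x₁,x₂) = z₁^{x₁} z₂^{x₂} + S(z₁,z₂) z₂^{x₁} z₁^{x₂}, with S(z₁,z₂) = -(α + βz₁ + γz₁z₂ - z₁)/(α + βz₂ + γz₁z₂ - z₂), satisfies the boundary condition Ψ(x, x-1) = α Ψ(x-1,x-1) + β Ψ(x-1,x) + γ Ψ(x,x) for all x ∈ ℤ. -/

import Mathlib

/-- For two particles on `ℤ`, the Bethe function
`Ψ(x₁,x₂) = z₁^{x₁} z₂^{x₂} + S(z₁,z₂) z₂^{x₁} z₁^{x₂}` with scattering amplitude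
`S(z₁,z₂) = -(α + βz₂ + γz₁z₂ - z₁)/(α + βz₁ + γz₁z₂ - z₂)` satisfies the boundary
condition `Ψ(x,x-1) = αΨ(x-1,x-1) + βΨ(x-1,x) + γΨ(x,x)` for all `x ∈ ℤ`. -/
theorem two_particle_boundary_condition (α β γ z₁ z₂ : ℂ)
    (hsum : α + β + γ = 1) (hz₁ : z₁ ≠ 0) (hz₂ : z₂ ≠ 0)
    (hden : α + β * z₁ + γ * z₁ * z₂ - z₂ ≠ 0)
    (S : ℂ) (hS : S = -(α + β * z₂ + γ * z₁ * z₂ - z₁) / (α + β * z₁ + γ * z₁ * z₂ - z₂))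
    (Ψ : ℤ → ℤ → ℂ) (hΨ : ∀ x₁ x₂ : ℤ, Ψ x₁ x₂ = z₁ ^ x₁ * z₂ ^ x₂ + S * (z₂ ^ x₁ * z₁ ^ x₂))
    (x : ℤ) :
    Ψ x (x - 1) = α * Ψ (x - 1) (x - 1) + β * Ψ (x - 1) x + γ * Ψ x x := by
  have h1 : z₁ ^ x = z₁ ^ (x - 1) * z₁ := by
    rw [← zpow_add_one₀ hz₁]; ring_nf
  have h2 : z₂ ^ x = z₂ ^ (x - 1) * z₂ := by
    rw [← zpow_add_one₀ hz₂]; ring_nf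
  simp only [hΨ, hS, h1, h2]
  have hden' : α + z₁ * β + z₁ * z₂ * γ - z₂ ≠ 0 := by
    convert hden using 1; ring
  field_simp
  ring
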